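/- One-sided rank-truncated projection perturbation bounds (Lemma 8.6): Under the stated assumptions, ‖A − C̃_k C̃_k† Ã‖_F ≤ 2‖E_J‖_F · ‖C† A‖_F + ‖E‖_F, and ‖A − Ã R̃_k† R̃_k‖_F ≤ 2‖E_I‖_F · ‖A R†‖_F + ‖E‖_F, where C̃_k and R̃_k are best rank-k approximations of C̃ and R̃. -/

import Mathlib

open Matrix

noncomputable section

variable {𝕂 : Type} [RCLike 𝕂]

/-- The Frobenius norm of a matrix. -/
noncomputable def frobNorm {m n : ℕ} (M : Matrix (Fin m) (Fin n) 𝕂) : ℝ :=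
  Real.sqrt (∑ i, ∑ j, ‖M i j‖ ^ 2)

/-- The `i`-th largest singular value of a matrix (1-indexed), i.e. the `i`-th largest
square root of an eigenvalue of `Mᴴ * M`. -/
noncomputable def sigma {m n : ℕ} (M : Matrix (Fin m) (Fin n) 𝕂) (i : ℕ) : ℝ :=
  ((List.ofFn fun j : Fin n =>
      Real.sqrt ((Matrix.isHermitian_conjTranspose_mul_self M).eigenvalues j)).insertionSort
      (· ≥ ·)).getD (i - 1) 0

/-- The spectral norm: the largest singular value. -/
noncomputable def specNorm {m n : ℕ} (M : Matrix (Fin m) (Fin n) 𝕂) : ℝ := sigma M 1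

/-- `P` is the Moore–Penrose pseudoinverse of `M`: the four Penrose conditions. -/
def IsMPInv {m n : ℕ} (M : Matrix (Fin m) (Fin n) 𝕂) (P : Matrix (Fin n) (Fin m) 𝕂) : Prop :=
  M * P * M = M ∧ P * M * P = P ∧ (M * P)ᴴ = M * P ∧ (P * M)ᴴ = P * M

/-- `Mr` is a truncated SVD of order `r` of `M`, i.e. a best rank-`r` approximation of `M`
(equivalently, a matrix obtained from an SVD of `M` by keeping the `r` largest singular
values and zeroing out the rest). -/
def IsTruncSVD {m n : ℕ} (M Mr : Matrix (Fin m) (Fin n) 𝕂) (r : ℕ) : Prop :=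
  Mr.rank ≤ r ∧ ∀ B : Matrix (Fin m) (Fin n) 𝕂, B.rank ≤ r → frobNorm (M - Mr) ≤ frobNorm (M - B)

/-- `Mt = [M]_τ`: the matrix obtained from an SVD of `M` by setting to zero every singular
value strictly less than `τ` (i.e. keeping exactly the singular values `≥ τ`). -/
def IsThresh {m n : ℕ} (M Mt : Matrix (Fin m) (Fin n) 𝕂) (τ : ℝ) : Prop :=
  IsTruncSVD M Mt (Nat.card {i : Fin (min m n) // τ ≤ sigma M ((i : ℕ) + 1)})

/-- The volume of a matrix: the product of its `min p q` largest singular values. -/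
noncomputable def vol {p q : ℕ} (M : Matrix (Fin p) (Fin q) 𝕂) : ℝ :=
  ∏ i ∈ Finset.range (min p q), sigma M (i + 1)

end

namespace Helper
attribute [local instance] Matrix.frobeniusNormedAddCommGroup
variable {𝕂 : Type} [RCLike 𝕂] {m n p q r : ℕ}

lemma frobNorm_eq_norm (M : Matrix (Fin m) (Fin n) 𝕂) : frobNorm M = ‖M‖ := by
  rw [Matrix.frobenius_norm_def, frobNorm, Real.sqrt_eq_rpow]
  congr 1
  refine Finset.sum_congr rfl fun i _ => Finset.sum_congr rfl fun j _ => ?_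
  rw [← Real.rpow_natCast]; norm_num

lemma frobNorm_nonneg (M : Matrix (Fin m) (Fin n) 𝕂) : 0 ≤ frobNorm M :=
  Real.sqrt_nonneg _

lemma frobNorm_add_le (M N : Matrix (Fin m) (Fin n) 𝕂) :
    frobNorm (M + N) ≤ frobNorm M + frobNorm N := by
  simp only [frobNorm_eq_norm]; exact norm_add_le _ _

lemma frobNorm_sub_le (M N : Matrix (Fin m) (Fin n) 𝕂) :
    frobNorm (M - N) ≤ frobNorm M + frobNorm N := by
  simp only [frobNorm_eq_norm]; exact norm_sub_le _ _

lemma frobNorm_neg (M : Matrix (Fin m) (Fin n) 𝕂) : frobNorm (-M) = frobNorm M := by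
  simp only [frobNorm_eq_norm]; exact norm_neg _

lemma frobNorm_mul_le (M : Matrix (Fin m) (Fin q) 𝕂) (N : Matrix (Fin q) (Fin n) 𝕂) :
    frobNorm (M * N) ≤ frobNorm M * frobNorm N := by
  simp only [frobNorm_eq_norm]; exact Matrix.frobenius_norm_mul M N

lemma frobNorm_conjTranspose (M : Matrix (Fin m) (Fin n) 𝕂) : frobNorm Mᴴ = frobNorm M := by
  simp only [frobNorm_eq_norm]; exact Matrix.frobenius_norm_conjTranspose M

lemma F2_eq_trace (M : Matrix (Fin m) (Fin n) 𝕂) :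
    (∑ i, ∑ j, ‖M i j‖ ^ 2 : ℝ) = RCLike.re (Mᴴ * M).trace := by
  rw [Matrix.trace]
  simp only [Matrix.diag_apply, Matrix.mul_apply, Matrix.conjTranspose_apply,
    RCLike.star_def, RCLike.conj_mul, map_sum, ← RCLike.ofReal_pow, RCLike.ofReal_re]
  rw [Finset.sum_comm]

lemma proj_contract (Q : Matrix (Fin m) (Fin m) 𝕂) (hQh : Qᴴ = Q) (hQ2 : Q * Q = Q)
    (X : Matrix (Fin m) (Fin n) 𝕂) :
    frobNorm (Q * X) ≤ frobNorm X ∧ frobNorm (X - Q * X) ≤ frobNorm X := by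
  have key : (Q * X)ᴴ * (Q * X) = Xᴴ * (Q * X) := by
    rw [conjTranspose_mul, hQh, Matrix.mul_assoc, ← Matrix.mul_assoc Q Q X, hQ2]
  have key2 : (X - Q * X)ᴴ * (X - Q * X) = Xᴴ * X - Xᴴ * (Q * X) := by
    rw [conjTranspose_sub, Matrix.sub_mul, Matrix.mul_sub, Matrix.mul_sub, key,
      conjTranspose_mul, hQh, Matrix.mul_assoc]
    abel
  have hQX := F2_eq_trace (Q * X)
  have hX := F2_eq_trace X
  have hD := F2_eq_trace (X - Q * X)
  rw [key] at hQX
  rw [key2, Matrix.trace_sub, map_sub] at hD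
  have hnn : ∀ (M : Matrix (Fin m) (Fin n) 𝕂), (0:ℝ) ≤ ∑ i, ∑ j, ‖M i j‖ ^ 2 := by
    intro M; positivity
  constructor
  · apply Real.sqrt_le_sqrt
    have := hnn (X - Q * X)
    linarith [hD, hQX, hX]
  · apply Real.sqrt_le_sqrt
    have := hnn (Q * X)
    linarith [hD, hQX, hX]

lemma submatrix_col_eq_mul (A : Matrix (Fin m) (Fin n) 𝕂) (κ : Fin q ↪ Fin n) :
    A.submatrix id ⇑κ = A * (Matrix.of fun j i => if j = κ i then (1:𝕂) else 0) := by
  ext i i'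
  simp [Matrix.mul_apply]

lemma range_fix {k : ℕ} (A : Matrix (Fin m) (Fin n) 𝕂) (κ : Fin q ↪ Fin n)
    (hA : A.rank = k) (hC : (A.submatrix id ⇑κ).rank = k)
    (Cp : Matrix (Fin q) (Fin m) 𝕂)
    (hCp : (A.submatrix id ⇑κ) * Cp * (A.submatrix id ⇑κ) = A.submatrix id ⇑κ) :
    A.submatrix id ⇑κ * Cp * A = A := by
  set C := A.submatrix id ⇑κ with hCdef
  have hle : LinearMap.range C.mulVecLin ≤ LinearMap.range A.mulVecLin := by
    rw [hCdef, submatrix_col_eq_mul A κ, Matrix.mulVecLin_mul]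
    exact LinearMap.range_comp_le_range _ _
  have heq : LinearMap.range C.mulVecLin = LinearMap.range A.mulVecLin := by
    apply Submodule.eq_of_le_of_finrank_le hle
    show Module.finrank 𝕂 (LinearMap.range A.mulVecLin) ≤ Module.finrank 𝕂 (LinearMap.range C.mulVecLin)
    rw [show Module.finrank 𝕂 (LinearMap.range A.mulVecLin) = A.rank from rfl,
      show Module.finrank 𝕂 (LinearMap.range C.mulVecLin) = C.rank from rfl, hA, hC]
  have hfix : ∀ x : Fin n → 𝕂, (C * Cp * A) *ᵥ x = A *ᵥ x := by
    intro x
    have hmem : A *ᵥ x ∈ LinearMap.range C.mulVecLin := by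
      rw [heq]; exact ⟨x, rfl⟩
    obtain ⟨y, hy⟩ := hmem
    rw [Matrix.mulVecLin_apply] at hy
    calc (C * Cp * A) *ᵥ x = (C * Cp) *ᵥ (A *ᵥ x) := by rw [Matrix.mulVec_mulVec]
      _ = (C * Cp) *ᵥ (C *ᵥ y) := by rw [hy]
      _ = (C * Cp * C) *ᵥ y := by rw [Matrix.mulVec_mulVec]
      _ = C *ᵥ y := by rw [hCp]
      _ = A *ᵥ x := hy
  ext i j
  have := congrFun (hfix (Pi.single j 1)) i
  simpa [Matrix.mulVec_single_one] using this


lemma isMPInv_conjTranspose {M : Matrix (Fin m) (Fin n) 𝕂} {P : Matrix (Fin n) (Fin m) 𝕂}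
    (h : IsMPInv M P) : IsMPInv Mᴴ Pᴴ := by
  obtain ⟨h1, h2, h3, h4⟩ := h
  refine ⟨?_, ?_, ?_, ?_⟩
  · have := congrArg conjTranspose h1
    simpa [conjTranspose_mul, Matrix.mul_assoc] using this
  · have := congrArg conjTranspose h2
    simpa [conjTranspose_mul, Matrix.mul_assoc] using this
  · rw [← conjTranspose_mul, conjTranspose_conjTranspose]
    exact h4.symm
  · rw [← conjTranspose_mul, conjTranspose_conjTranspose]
    exact h3.symm

open scoped ComplexOrder in
lemma isTruncSVD_conjTranspose {M Mr : Matrix (Fin m) (Fin n) 𝕂} {r : ℕ}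
    (h : IsTruncSVD M Mr r) : IsTruncSVD Mᴴ Mrᴴ r := by
  refine ⟨by rw [Matrix.rank_conjTranspose]; exact h.1, fun B hB => ?_⟩
  have hBr : Bᴴ.rank ≤ r := by rw [Matrix.rank_conjTranspose]; exact hB
  have := h.2 Bᴴ hBr
  calc frobNorm (Mᴴ - Mrᴴ) = frobNorm ((M - Mr)ᴴ) := by rw [conjTranspose_sub]
    _ = frobNorm (M - Mr) := frobNorm_conjTranspose _
    _ ≤ frobNorm (M - Bᴴ) := this
    _ = frobNorm ((Mᴴ - B)ᴴ) := by rw [conjTranspose_sub, conjTranspose_conjTranspose]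
    _ = frobNorm (Mᴴ - B) := frobNorm_conjTranspose _

lemma main_left {m n q k : ℕ} (A E : Matrix (Fin m) (Fin n) 𝕂)
    (C EJ Ctk : Matrix (Fin m) (Fin q) 𝕂)
    (Cp : Matrix (Fin q) (Fin m) 𝕂)
    (hrankCk : C.rank ≤ k)
    (hfix : C * Cp * A = A)
    (hCtk : IsTruncSVD (C + EJ) Ctk k)
    (Ctkp : Matrix (Fin q) (Fin m) 𝕂) (hCtkp : IsMPInv Ctk Ctkp) :
    frobNorm (A - Ctk * Ctkp * (A + E)) ≤
      2 * frobNorm EJ * frobNorm (Cp * A) + frobNorm E := by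
  set P := Ctk * Ctkp with hPdef
  have hPh : Pᴴ = P := hCtkp.2.2.1
  have hP2 : P * P = P := by
    have : P * P = (Ctk * Ctkp * Ctk) * Ctkp := by
      simp only [hPdef, Matrix.mul_assoc]
    rw [this, hCtkp.1]
  have hPCtk : P * Ctk = Ctk := by rw [hPdef, hCtkp.1]
  set Ct := C + EJ with hCt
  -- splitting
  have h1 : (C - P * C) * (Cp * A) = A - P * A := by
    rw [Matrix.sub_mul]
    congr 1
    · rw [← Matrix.mul_assoc, hfix]
    · rw [Matrix.mul_assoc P C (Cp * A), ← Matrix.mul_assoc C Cp A, hfix]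
  have hsplit : A - P * (A + E) = (C - P * C) * (Cp * A) - P * E := by
    rw [h1, Matrix.mul_add]; abel
  -- bound on (1-P)C
  have hzero : Ctk - P * Ctk = 0 := by rw [hPCtk, sub_self]
  have hdecomp : C - P * C = ((C - Ct) - P * (C - Ct)) + ((Ct - Ctk) - P * (Ct - Ctk)) := by
    have := hzero
    rw [Matrix.mul_sub, Matrix.mul_sub, hPCtk]
    abel
  have t1 : frobNorm ((C - Ct) - P * (C - Ct)) ≤ frobNorm EJ := by
    have h := (proj_contract P hPh hP2 (C - Ct)).2
    have : frobNorm (C - Ct) = frobNorm EJ := by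
      rw [hCt, show C - (C + EJ) = -EJ by abel, frobNorm_neg]
    linarith
  have t2 : frobNorm ((Ct - Ctk) - P * (Ct - Ctk)) ≤ frobNorm EJ := by
    have h := (proj_contract P hPh hP2 (Ct - Ctk)).2
    have h2 : frobNorm (Ct - Ctk) ≤ frobNorm EJ := by
      have := hCtk.2 C hrankCk
      rw [hCt] at this ⊢
      simpa using this
    linarith
  have hC1 : frobNorm (C - P * C) ≤ 2 * frobNorm EJ := by
    rw [hdecomp]
    have := frobNorm_add_le ((C - Ct) - P * (C - Ct)) ((Ct - Ctk) - P * (Ct - Ctk))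
    linarith
  -- conclude
  have hPE : frobNorm (P * E) ≤ frobNorm E := (proj_contract P hPh hP2 E).1
  calc frobNorm (A - P * (A + E))
      = frobNorm ((C - P * C) * (Cp * A) - P * E) := by rw [hsplit]
    _ ≤ frobNorm ((C - P * C) * (Cp * A)) + frobNorm (P * E) := frobNorm_sub_le _ _
    _ ≤ frobNorm (C - P * C) * frobNorm (Cp * A) + frobNorm E := by
        have := frobNorm_mul_le (C - P * C) (Cp * A)
        linarith
    _ ≤ 2 * frobNorm EJ * frobNorm (Cp * A) + frobNorm E := by
        have := frobNorm_nonneg (Cp * A)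
        nlinarith [frobNorm_nonneg (C - P * C)]



end Helper

open Helper in
/-- Lemma 8.6: one-sided rank-truncated projection perturbation bounds. -/
theorem one_sided_rank_truncated_projection_perturbation {𝕂 : Type} [RCLike 𝕂]
    {m n k p q : ℕ}
    (A E : Matrix (Fin m) (Fin n) 𝕂)
    (hrankA : A.rank = k)
    (ι : Fin p ↪ Fin m) (κ : Fin q ↪ Fin n)
    (hrankC : (A.submatrix id ⇑κ).rank = k)
    (hrankU : (A.submatrix ⇑ι ⇑κ).rank = k)
    (hrankR : (A.submatrix ⇑ι id).rank = k)
    (Cp : Matrix (Fin q) (Fin m) 𝕂) (hCp : IsMPInv (A.submatrix id ⇑κ) Cp)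
    (Rp : Matrix (Fin n) (Fin p) 𝕂) (hRp : IsMPInv (A.submatrix ⇑ι id) Rp)
    (Ctk : Matrix (Fin m) (Fin q) 𝕂) (hCtk : IsTruncSVD ((A + E).submatrix id ⇑κ) Ctk k)
    (Ctkp : Matrix (Fin q) (Fin m) 𝕂) (hCtkp : IsMPInv Ctk Ctkp)
    (Rtk : Matrix (Fin p) (Fin n) 𝕂) (hRtk : IsTruncSVD ((A + E).submatrix ⇑ι id) Rtk k)
    (Rtkp : Matrix (Fin n) (Fin p) 𝕂) (hRtkp : IsMPInv Rtk Rtkp) :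
    frobNorm (A - Ctk * Ctkp * (A + E)) ≤
        2 * frobNorm (E.submatrix id ⇑κ) * frobNorm (Cp * A) + frobNorm E ∧
    frobNorm (A - (A + E) * Rtkp * Rtk) ≤
        2 * frobNorm (E.submatrix ⇑ι id) * frobNorm (A * Rp) + frobNorm E := by
  open scoped ComplexOrder in
  constructor
  · have hsub : (A + E).submatrix id ⇑κ = A.submatrix id ⇑κ + E.submatrix id ⇑κ := by
      ext i j; simp
    rw [hsub] at hCtk
    exact main_left A E (A.submatrix id ⇑κ) (E.submatrix id ⇑κ) Ctk Cp
      (le_of_eq hrankC)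
      (range_fix A κ hrankA hrankC Cp hCp.1) hCtk Ctkp hCtkp
  · -- dual side
    set R := A.submatrix ⇑ι id with hRdef
    have hRT : Aᴴ.submatrix id ⇑ι = Rᴴ := by
      rw [hRdef, Matrix.conjTranspose_submatrix]
    have hrankAH : Aᴴ.rank = k := by rw [Matrix.rank_conjTranspose, hrankA]
    have hrankRH : (Aᴴ.submatrix id ⇑ι).rank = k := by
      rw [hRT, Matrix.rank_conjTranspose]; exact hrankR
    have hMP : Aᴴ.submatrix id ⇑ι * Rpᴴ * Aᴴ.submatrix id ⇑ι = Aᴴ.submatrix id ⇑ι := by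
      rw [hRT]
      have := congrArg conjTranspose hRp.1
      simpa [conjTranspose_mul, Matrix.mul_assoc] using this
    have hfix : Rᴴ * Rpᴴ * Aᴴ = Aᴴ := by
      have := range_fix Aᴴ ι hrankAH hrankRH Rpᴴ hMP
      rwa [hRT] at this
    have hCtk' : IsTruncSVD (Rᴴ + (E.submatrix ⇑ι id)ᴴ) Rtkᴴ k := by
      have h := isTruncSVD_conjTranspose hRtk
      have e : ((A + E).submatrix ⇑ι id)ᴴ = Rᴴ + (E.submatrix ⇑ι id)ᴴ := by
        ext i j; simp [hRdef]
      rwa [e] at h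
    have key := main_left Aᴴ Eᴴ Rᴴ (E.submatrix ⇑ι id)ᴴ Rtkᴴ Rpᴴ
      (by rw [Matrix.rank_conjTranspose]; exact le_of_eq hrankR)
      hfix hCtk' Rtkpᴴ (isMPInv_conjTranspose hRtkp)
    have e1 : Aᴴ - Rtkᴴ * Rtkpᴴ * (Aᴴ + Eᴴ) = (A - (A + E) * Rtkp * Rtk)ᴴ := by
      rw [conjTranspose_sub, conjTranspose_mul, conjTranspose_mul, conjTranspose_add,
        Matrix.mul_assoc]
    rw [e1, frobNorm_conjTranspose, frobNorm_conjTranspose,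
      show Rpᴴ * Aᴴ = (A * Rp)ᴴ from (conjTranspose_mul A Rp).symm,
      frobNorm_conjTranspose, frobNorm_conjTranspose] at key
    exact key
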